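/- Let V be a finite-dimensional real inner product space and A : V → V a skew-symmetric linear operator. Then there exists a unique partial isometry J : V → V with the same kernel as A such that A = |A| ∘ J = J ∘ |A|, where |A| = √(-A²) is the positive semidefinite square root of -A². Moreover, J restricted to the orthogonal complement of ker A is an orthogonal complex structure, i.e., J² = -Id and J is an isometry on (ker A)^⊥. -/

import Mathlib

open RealInnerProductSpace

/-- polar decomposition of a skew-symmetric operator on a
finite-dimensional real inner product space: there is a unique partial
isometry `J` with the same kernel as `A` such that `A = |A| ∘ J = J ∘ |A|`,
where `|A| = √(-A²)` (here `B` is any positive semidefinite square root of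
`-A²`, which is unique); moreover `J` is an orthogonal complex structure
on `(ker A)ᗮ`. -/
theorem stmt_0 {V : Type*} [NormedAddCommGroup V] [InnerProductSpace ℝ V]
    [FiniteDimensional ℝ V]
    (A : V →ₗ[ℝ] V)
    (hA : ∀ x y : V, ⟪A x, y⟫ = -⟪x, A y⟫)
    (B : V →ₗ[ℝ] V)
    (hBsym : ∀ x y : V, ⟪B x, y⟫ = ⟪x, B y⟫)
    (hBpos : ∀ x : V, 0 ≤ ⟪B x, x⟫)
    (hB2 : B ∘ₗ B = -(A ∘ₗ A)) :
    (∃! Jm : V →ₗ[ℝ] V,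
      LinearMap.ker Jm = LinearMap.ker A ∧
      (∀ x ∈ (LinearMap.ker A)ᗮ, ‖Jm x‖ = ‖x‖) ∧
      A = B ∘ₗ Jm ∧ A = Jm ∘ₗ B) ∧
    (∀ Jm : V →ₗ[ℝ] V,
      (LinearMap.ker Jm = LinearMap.ker A ∧
        (∀ x ∈ (LinearMap.ker A)ᗮ, ‖Jm x‖ = ‖x‖) ∧
        A = B ∘ₗ Jm ∧ A = Jm ∘ₗ B) →
      ∀ x ∈ (LinearMap.ker A)ᗮ,
        Jm (Jm x) = -x ∧ Jm x ∈ (LinearMap.ker A)ᗮ ∧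
        ∀ y ∈ (LinearMap.ker A)ᗮ, ⟪Jm x, Jm y⟫ = ⟪x, y⟫) := by
  classical
  have hBsymm : B.IsSymmetric := fun x y => hBsym x y
  have hfin : Module.finrank ℝ V = Module.finrank ℝ V := rfl
  set n := Module.finrank ℝ V with hndef
  let e : OrthonormalBasis (Fin n) ℝ V := hBsymm.eigenvectorBasis hfin
  let μ : Fin n → ℝ := hBsymm.eigenvalues hfin
  have hBe : ∀ i, B (e i) = μ i • e i := fun i => hBsymm.apply_eigenvectorBasis hfin i
  have hμ0 : ∀ i, 0 ≤ μ i := by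
    intro i
    have h := hBpos (e i)
    rw [hBe i, real_inner_smul_left, real_inner_self_eq_norm_mul_norm,
      e.orthonormal.1 i] at h
    simpa using h
  have hB2' : ∀ x, B (B x) = -(A (A x)) := by
    intro x
    have := LinearMap.ext_iff.mp hB2 x
    simpa using this
  have hAA : ∀ x, ⟪A x, A x⟫ = ⟪B x, B x⟫ := by
    intro x
    calc ⟪A x, A x⟫ = -⟪x, A (A x)⟫ := hA x (A x)
      _ = ⟪x, B (B x)⟫ := by rw [hB2' x, inner_neg_right]
      _ = ⟪B x, B x⟫ := (hBsym x (B x)).symm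
  have hker : LinearMap.ker B = LinearMap.ker A := by
    ext x
    simp only [LinearMap.mem_ker]
    constructor <;> intro h
    · have h2 : ⟪A x, A x⟫ = (0 : ℝ) := by rw [hAA, h, inner_zero_left]
      exact inner_self_eq_zero.mp h2
    · have h2 : ⟪B x, B x⟫ = (0 : ℝ) := by rw [← hAA, h, inner_zero_left]
      exact inner_self_eq_zero.mp h2
  have hAe0 : ∀ i, μ i = 0 → A (e i) = 0 := by
    intro i hi
    have hBi : B (e i) = 0 := by rw [hBe i, hi, zero_smul]
    have : e i ∈ LinearMap.ker A := by rw [← hker]; exact hBi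
    exact this
  have hABsq : ∀ x, A (B (B x)) = B (B (A x)) := by
    intro x
    rw [hB2' x, map_neg, hB2' (A x)]
  have horth : ∀ i j, μ i ≠ μ j → ⟪A (e i), e j⟫ = 0 := by
    intro i j hne
    have h1 : ⟪A (B (B (e i))), e j⟫ = μ i * μ i * ⟪A (e i), e j⟫ := by
      rw [hBe i, map_smul, hBe i, map_smul, map_smul, real_inner_smul_left,
        real_inner_smul_left]
      ring
    have h2 : ⟪A (B (B (e i))), e j⟫ = μ j * μ j * ⟪A (e i), e j⟫ := by
      rw [hABsq, hBsym (B (A (e i))) (e j), hBsym (A (e i)) (B (e j)), hBe j,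
        map_smul, hBe j, real_inner_smul_right, real_inner_smul_right]
      ring
    have hsq : μ i * μ i - μ j * μ j ≠ 0 := by
      rcases hne.lt_or_gt with h | h <;> nlinarith [hμ0 i, hμ0 j]
    have hc : (μ i * μ i - μ j * μ j) * ⟪A (e i), e j⟫ = 0 := by
      linear_combination h2 - h1
    exact (mul_eq_zero.mp hc).resolve_left hsq
  have horth' : ∀ i k, μ i ≠ μ k → ⟪e k, A (e i)⟫ = 0 := by
    intro i k hne
    rw [real_inner_comm]
    exact horth i k hne
  have hBA : ∀ i, B (A (e i)) = μ i • A (e i) := by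
    intro i
    conv_lhs => rw [← e.sum_repr' (A (e i))]
    conv_rhs => rw [← e.sum_repr' (A (e i))]
    rw [map_sum, Finset.smul_sum]
    refine Finset.sum_congr rfl fun k _ => ?_
    rw [map_smul, hBe k, smul_smul, smul_smul]
    by_cases h : μ i = μ k
    · rw [h, mul_comm]
    · rw [horth' i k h]
      simp
  -- the partial isometry
  let J : V →ₗ[ℝ] V := Module.Basis.constr e.toBasis ℝ (fun i => (μ i)⁻¹ • A (e i))
  have hJe : ∀ i, J (e i) = (μ i)⁻¹ • A (e i) := by
    intro i
    have := Module.Basis.constr_basis e.toBasis ℝ (fun i => (μ i)⁻¹ • A (e i)) i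
    simpa [J] using this
  have hJA : ∀ i, J (A (e i)) = (μ i)⁻¹ • A (A (e i)) := by
    intro i
    conv_lhs => rw [← e.sum_repr' (A (e i))]
    conv_rhs => rw [← e.sum_repr' (A (e i))]
    rw [map_sum, map_sum, Finset.smul_sum]
    refine Finset.sum_congr rfl fun k _ => ?_
    rw [map_smul, map_smul, hJe k, smul_smul, smul_smul]
    by_cases h : μ i = μ k
    · rw [h, mul_comm]
    · rw [horth' i k h]
      simp
  have hBJ : A = B ∘ₗ J := by
    symm
    apply Module.Basis.ext e.toBasis
    intro i
    rw [OrthonormalBasis.coe_toBasis, LinearMap.comp_apply, hJe i, map_smul, hBA i,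
      smul_smul]
    by_cases h : μ i = 0
    · rw [hAe0 i h]
      simp
    · rw [inv_mul_cancel₀ h, one_smul]
  have hJB : A = J ∘ₗ B := by
    symm
    apply Module.Basis.ext e.toBasis
    intro i
    rw [OrthonormalBasis.coe_toBasis, LinearMap.comp_apply, hBe i, map_smul, hJe i,
      smul_smul]
    by_cases h : μ i = 0
    · rw [hAe0 i h]
      simp
    · rw [mul_inv_cancel₀ h, one_smul]
  have hJAop : J ∘ₗ A = -B := by
    apply Module.Basis.ext e.toBasis
    intro i
    rw [OrthonormalBasis.coe_toBasis, LinearMap.comp_apply, hJA i, LinearMap.neg_apply]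
    have hAAe : A (A (e i)) = -((μ i * μ i) • e i) := by
      have h := hB2' (e i)
      rw [hBe i, map_smul, hBe i, smul_smul] at h
      exact neg_eq_iff_eq_neg.mp h.symm
    by_cases h : μ i = 0
    · rw [hAAe, hBe i, h]
      simp
    · rw [hAAe, hBe i, smul_neg, smul_smul]
      rw [show (μ i)⁻¹ * (μ i * μ i) = μ i by field_simp]
  have hkerJ : LinearMap.ker J = LinearMap.ker A := by
    ext x
    simp only [LinearMap.mem_ker]
    constructor <;> intro h
    · have := LinearMap.ext_iff.mp hBJ x
      rw [LinearMap.comp_apply, h, map_zero] at this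
      exact this
    · have hxB : B x = 0 := by rw [← LinearMap.mem_ker, hker]; exact h
      conv_lhs => rw [← e.sum_repr' x]
      rw [map_sum]
      refine Finset.sum_eq_zero fun k _ => ?_
      rw [map_smul, hJe k]
      by_cases hk : μ k = 0
      · rw [hAe0 k hk]
        simp
      · have : ⟪e k, x⟫ = 0 := by
          have h1 : ⟪B (e k), x⟫ = 0 := by rw [hBsym, hxB, inner_zero_right]
          rw [hBe k, real_inner_smul_left] at h1
          exact (mul_eq_zero.mp h1).resolve_left hk
        rw [this]
        simp
  have hrangeB : LinearMap.range B = (LinearMap.ker B)ᗮ := by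
    have hle : LinearMap.range B ≤ (LinearMap.ker B)ᗮ := by
      rintro _ ⟨z, rfl⟩
      rw [Submodule.mem_orthogonal]
      intro u hu
      rw [← hBsym, LinearMap.mem_ker.mp hu, inner_zero_left]
    refine Submodule.eq_of_le_of_finrank_eq hle ?_
    have h1 := LinearMap.finrank_range_add_finrank_ker B
    have h2 := Submodule.finrank_add_finrank_orthogonal (LinearMap.ker B)
    omega
  have hrange : ∀ x ∈ (LinearMap.ker A)ᗮ, ∃ z, B z = x := by
    intro x hx
    have : x ∈ LinearMap.range B := by rw [hrangeB, hker]; exact hx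
    exact this
  have hrangeA : ∀ z, A z ∈ (LinearMap.ker A)ᗮ := by
    intro z
    rw [Submodule.mem_orthogonal]
    intro u hu
    rw [real_inner_comm, hA, LinearMap.mem_ker.mp hu, inner_zero_right, neg_zero]
  have hisomJ : ∀ x ∈ (LinearMap.ker A)ᗮ, ‖J x‖ = ‖x‖ := by
    intro x hx
    obtain ⟨z, rfl⟩ := hrange x hx
    have h1 : J (B z) = A z := (LinearMap.ext_iff.mp hJB z).symm
    rw [h1]
    have h2 := hAA z
    rw [real_inner_self_eq_norm_mul_norm, real_inner_self_eq_norm_mul_norm] at h2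
    nlinarith [norm_nonneg (A z), norm_nonneg (B z), h2]
  have huniq : ∀ Jm : V →ₗ[ℝ] V,
      (LinearMap.ker Jm = LinearMap.ker A ∧
        (∀ x ∈ (LinearMap.ker A)ᗮ, ‖Jm x‖ = ‖x‖) ∧
        A = B ∘ₗ Jm ∧ A = Jm ∘ₗ B) → Jm = J := by
    rintro Jm ⟨hk, -, -, hJmB⟩
    ext x
    obtain ⟨u, hu, v, hv, rfl⟩ := (LinearMap.ker A).exists_add_mem_mem_orthogonal x
    obtain ⟨z, rfl⟩ := hrange v hv
    have h1 : Jm u = 0 := by rw [← LinearMap.mem_ker, hk]; exact hu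
    have h2 : J u = 0 := by rw [← LinearMap.mem_ker, hkerJ]; exact hu
    have h3 : Jm (B z) = A z := (LinearMap.ext_iff.mp hJmB z).symm
    have h4 : J (B z) = A z := (LinearMap.ext_iff.mp hJB z).symm
    rw [map_add, map_add, h1, h2, h3, h4]
  refine ⟨⟨J, ⟨hkerJ, hisomJ, hBJ, hJB⟩, huniq⟩, ?_⟩
  rintro Jm hJm x hx
  obtain ⟨hk, hisom, hBJm, hJmB⟩ := hJm
  obtain ⟨z, hz⟩ := hrange x hx
  have hJmJ : Jm = J := huniq Jm ⟨hk, hisom, hBJm, hJmB⟩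
  refine ⟨?_, ?_, ?_⟩
  · rw [hJmJ]
    have e1 : J x = A z := by rw [← hz]; exact (LinearMap.ext_iff.mp hJB z).symm
    have e2 : J (A z) = -(B z) := by
      have := LinearMap.ext_iff.mp hJAop z
      simpa using this
    rw [e1, e2, hz]
  · have h3 : Jm x = A z := by rw [← hz]; exact (LinearMap.ext_iff.mp hJmB z).symm
    rw [h3]
    exact hrangeA z
  · intro y hy
    have hxy : x + y ∈ (LinearMap.ker A)ᗮ := Submodule.add_mem _ hx hy
    rw [real_inner_eq_norm_add_mul_self_sub_norm_mul_self_sub_norm_mul_self_div_two,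
      real_inner_eq_norm_add_mul_self_sub_norm_mul_self_sub_norm_mul_self_div_two,
      ← map_add, hisom _ hxy, hisom _ hx, hisom _ hy]
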